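/- arXiv:2501.10570 — 6 statements merged into one kernel-verified Lean document; each statement's English description precedes it below -/
import Mathlib

section
/- Let a₁,…,aₙ ∈ ℝ^n be linearly independent with 0 < ‖a₁‖ ≤ … ≤ ‖aₙ‖, δ the orthogonality defect, and t > 0. Then the inradius r(t) of the simplex S_A(t) = conv{0, t·a₁, …, t·aₙ} satisfies r(t) ≥ t·‖a₁‖/(n·(n + 2^{n−1})·δ). -/
open MeasureTheory Metric Set
open scoped ENNReal

/-- The line through two points `x` and `y` in Euclidean space. -/
def lineThrough {n : ℕ} (x y : EuclideanSpace ℝ (Fin n)) : Set (EuclideanSpace ℝ (Fin n)) :=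
  {p | ∃ t : ℝ, p = x + t • (y - x)}

/-- `x` illuminates the boundary point `y` of the convex body `K`:
the segment `[x,y]` misses the interior of `K`, but the line through `x,y` meets it. -/
def Illum {n : ℕ} (K : Set (EuclideanSpace ℝ (Fin n))) (x y : EuclideanSpace ℝ (Fin n)) : Prop :=
  segment ℝ x y ∩ interior K = ∅ ∧ (lineThrough x y ∩ interior K).Nonempty

/-- A set `S` illuminates `K` if every boundary point of `K` is illuminated by some point of `S`. -/
def IllumSet {n : ℕ} (S K : Set (EuclideanSpace ℝ (Fin n))) : Prop :=
  ∀ y ∈ frontier K, ∃ x ∈ S, Illum K x y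

/-- `K` has smooth boundary: a unique supporting hyperplane (unit outward normal)
at every boundary point. -/
def SmoothBody {n : ℕ} (K : Set (EuclideanSpace ℝ (Fin n))) : Prop :=
  ∀ y ∈ frontier K, ∃! u : EuclideanSpace ℝ (Fin n),
    ‖u‖ = 1 ∧ ∀ z ∈ K, (inner ℝ u z : ℝ) ≤ inner ℝ u y

/-- The inradius of a set: supremum of radii of closed balls contained in it. -/
noncomputable def inradius {n : ℕ} (P : Set (EuclideanSpace ℝ (Fin n))) : ℝ :=
  sSup {r : ℝ | 0 ≤ r ∧ ∃ c, Metric.closedBall c r ⊆ P}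

/-- The determinant of the matrix whose columns are the vectors `a 0, …, a (n-1)`. -/
noncomputable def detv {n : ℕ} (a : Fin n → EuclideanSpace ℝ (Fin n)) : ℝ :=
  (Matrix.of fun i j => a j i).det

section HadamardAux

open Finset
open InnerProductSpace

instance finWFLT (m : ℕ) : WellFoundedLT (Fin m) := inferInstance

section Had
variable {m : ℕ}

noncomputable def rowMat (f : Fin m → EuclideanSpace ℝ (Fin m)) : Matrix (Fin m) (Fin m) ℝ :=
  Matrix.of fun i j => f i j

lemma rowMat_row (f : Fin m → EuclideanSpace ℝ (Fin m)) (i : Fin m) :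
    rowMat f i = f i := rfl

lemma det_updateRow_finsum (M : Matrix (Fin m) (Fin m) ℝ) (k : Fin m) {α : Type*}
    (s : Finset α) (w : α → (Fin m → ℝ)) :
    (M.updateRow k (∑ i ∈ s, w i)).det = ∑ i ∈ s, (M.updateRow k (w i)).det := by
  classical
  induction s using Finset.induction_on with
  | empty =>
      simp only [Finset.sum_empty]
      have := Matrix.det_updateRow_smul M k (0:ℝ) 0
      simpa using this
  | insert x s hnotmem ih =>
      rw [Finset.sum_insert hnotmem, Matrix.det_updateRow_add, ih, Finset.sum_insert hnotmem]

lemma gramSchmidt_norm_le (f : Fin m → EuclideanSpace ℝ (Fin m)) (i : Fin m) :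
    ‖gramSchmidt ℝ f i‖ ≤ ‖f i‖ := by
  set g := gramSchmidt ℝ f with hg
  obtain ⟨w, hdef, horth⟩ : ∃ w, f i = g i + w ∧ (inner ℝ (g i) w : ℝ) = 0 := by
    refine ⟨_, gramSchmidt_def'' ℝ f i, ?_⟩
    rw [inner_sum]
    refine Finset.sum_eq_zero fun j hj => ?_
    rw [real_inner_smul_right, gramSchmidt_orthogonal ℝ f (Finset.mem_Iio.mp hj).ne',
      mul_zero]
  have hsq : ‖f i‖ ^ 2 = ‖g i‖ ^ 2 + ‖w‖ ^ 2 := by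
    rw [hdef, norm_add_sq_real, horth]; ring
  nlinarith [norm_nonneg (f i), norm_nonneg (g i), sq_nonneg ‖w‖]

lemma det_rowMat_gramSchmidt (f : Fin m → EuclideanSpace ℝ (Fin m)) :
    (rowMat f).det = (rowMat (gramSchmidt ℝ f)).det := by
  classical
  set g := gramSchmidt ℝ f with hg
  suffices H : ∀ N : ℕ, N ≤ m →
      (rowMat (fun j => if (j:ℕ) < N then g j else f j)).det = (rowMat f).det by
    have := H m le_rfl
    simp only [Fin.is_lt, if_true] at this
    exact this.symm
  intro N
  induction N with
  | zero => intro _; simp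
  | succ N ih =>
    intro hNm
    have hN : N ≤ m := Nat.le_of_succ_le hNm
    have ihN := ih hN
    set k : Fin m := ⟨N, hNm⟩ with hk
    set v : Fin m → EuclideanSpace ℝ (Fin m) := fun j => if (j:ℕ) < N then g j else f j with hv
    have h1 : rowMat (fun j => if (j:ℕ) < N + 1 then g j else f j)
        = (rowMat v).updateRow k (g k) := by
      ext j x
      by_cases hj : j = k
      · subst hj; simp [rowMat, Matrix.updateRow_self, hk]
      · have hjk : (j:ℕ) ≠ N := fun h => hj (Fin.ext h)
        have : ((j:ℕ) ≤ N) ↔ ((j:ℕ) < N) := by omega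
        simp [rowMat, Matrix.updateRow_ne hj, hv, this]
    have h2 : (rowMat v).updateRow k (f k) = rowMat v := by
      ext j x
      by_cases hj : j = k
      · subst hj; simp [rowMat, Matrix.updateRow_self, hv, hk]
      · simp [Matrix.updateRow_ne hj]
    rw [h1]
    have hfk : (f k : Fin m → ℝ)
        = (g k : Fin m → ℝ) + ∑ j ∈ Finset.Iio k, (((inner ℝ (g j) (f k) : ℝ)) / (‖g j‖:ℝ)^2) • (g j : Fin m → ℝ) :=
      by have h := congrArg WithLp.ofLp (gramSchmidt_def'' ℝ f k); simpa [WithLp.ofLp_sum] using h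
    have key : ((rowMat v).updateRow k (g k)).det = ((rowMat v).updateRow k (f k)).det := by
      rw [hfk, Matrix.det_updateRow_add,
        det_updateRow_finsum (rowMat v) k (Finset.Iio k)]
      have hzero : ∀ j ∈ Finset.Iio k,
          ((rowMat v).updateRow k ((((inner ℝ (g j) (f k) : ℝ)) / (‖g j‖:ℝ)^2) • (g j : Fin m → ℝ))).det = 0 := by
        intro j hj
        have hjk : j < k := Finset.mem_Iio.mp hj
        rw [Matrix.det_updateRow_smul]
        have hrow : ((rowMat v).updateRow k (g j : Fin m → ℝ)) j
            = ((rowMat v).updateRow k (g j : Fin m → ℝ)) k := by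
          rw [Matrix.updateRow_ne hjk.ne, Matrix.updateRow_self]
          have hjN : (j:ℕ) < N := hjk
          show (v j).ofLp = (g j).ofLp
          rw [hv]
          exact congrArg WithLp.ofLp (if_pos hjN)
        rw [Matrix.det_zero_of_row_eq hjk.ne hrow, mul_zero]
      rw [Finset.sum_eq_zero hzero, add_zero]
    rw [key, h2, ihN]

lemma det_rowMat_orthogonal_sq (g : Fin m → EuclideanSpace ℝ (Fin m))
    (horth : ∀ i j, i ≠ j → (inner ℝ (g i) (g j) : ℝ) = 0) :
    (rowMat g).det ^ 2 = ∏ i, ‖g i‖ ^ 2 := by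
  classical
  have hmul : rowMat g * (rowMat g).transpose = Matrix.diagonal fun i => ‖g i‖ ^ 2 := by
    ext i j
    have hinner : (inner ℝ (g i) (g j) : ℝ) = ∑ x, g i x * g j x := by
      simp [PiLp.inner_apply, RCLike.inner_apply, mul_comm]
    by_cases hij : i = j
    · subst hij
      simp only [Matrix.mul_apply, Matrix.transpose_apply, Matrix.diagonal_apply_eq]
      rw [show ∑ x, rowMat g i x * (rowMat g) i x = (inner ℝ (g i) (g i) : ℝ) from (hinner ▸ rfl)]
      exact real_inner_self_eq_norm_sq (g i)
    · simp only [Matrix.mul_apply, Matrix.transpose_apply, Matrix.diagonal_apply_ne _ hij]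
      rw [show ∑ x, rowMat g i x * (rowMat g) j x = (inner ℝ (g i) (g j) : ℝ) from (hinner ▸ rfl)]
      exact horth i j hij
  have := congrArg Matrix.det hmul
  rwa [Matrix.det_mul, Matrix.det_transpose, ← pow_two, Matrix.det_diagonal] at this

lemma hadamard_ineq (f : Fin m → EuclideanSpace ℝ (Fin m)) :
    |(Matrix.of fun i j => f j i).det| ≤ ∏ j, ‖f j‖ := by
  classical
  have htr : (Matrix.of fun i j => f j i) = (rowMat f).transpose := rfl
  rw [htr, Matrix.det_transpose, det_rowMat_gramSchmidt]
  set g := gramSchmidt ℝ f with hg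
  have hsq := det_rowMat_orthogonal_sq g (fun i j hij => gramSchmidt_orthogonal ℝ f hij)
  have habs : |(rowMat g).det| = ∏ i, ‖g i‖ := by
    have h1 : |(rowMat g).det| = Real.sqrt ((rowMat g).det ^ 2) := (Real.sqrt_sq_eq_abs _).symm
    rw [h1, hsq, Finset.prod_pow,
      Real.sqrt_sq (Finset.prod_nonneg fun i _ => norm_nonneg _)]
  rw [habs]
  exact Finset.prod_le_prod (fun i _ => norm_nonneg _) fun i _ => gramSchmidt_norm_le f i

end Had

end HadamardAux

set_option maxHeartbeats 1000000 in
/-- Lower bound for the inradius of the simplex with vertices 0, t·a₁, …, t·aₙ. -/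
theorem simplex_inradius_bound {n : ℕ} (hn : 0 < n) (a : Fin n → EuclideanSpace ℝ (Fin n))
    (ha : LinearIndependent ℝ a) (hord : ∀ i j : Fin n, i ≤ j → ‖a i‖ ≤ ‖a j‖)
    (h0 : 0 < ‖a ⟨0, hn⟩‖) (t : ℝ) (ht : 0 < t) :
    t * ‖a ⟨0, hn⟩‖ / (n * (n + 2 ^ (n - 1)) * ((∏ i, ‖a i‖) / |detv a|))
      ≤ inradius (convexHull ℝ (insert 0 (Set.range fun i => t • a i))) := by
  classical
  set i₀ : Fin n := ⟨0, hn⟩ with hi₀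
  haveI : Nonempty (Fin n) := ⟨i₀⟩
  have hcard : Fintype.card (Fin n) = Module.finrank ℝ (EuclideanSpace ℝ (Fin n)) := by
    simp
  obtain ⟨B, hB⟩ : ∃ B : Module.Basis (Fin n) ℝ (EuclideanSpace ℝ (Fin n)), ⇑B = a :=
    ⟨basisOfLinearIndependentOfCardEqFinrank ha hcard,
      coe_basisOfLinearIndependentOfCardEqFinrank ha hcard⟩
  set A : Matrix (Fin n) (Fin n) ℝ := Matrix.of fun i j => a j i with hA
  set L : EuclideanSpace ℝ (Fin n) ≃ₗ[ℝ] (Fin n → ℝ) :=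
    WithLp.linearEquiv 2 ℝ (Fin n → ℝ) with hL
  -- determinant nonzero
  have hdet0 : A.det ≠ 0 := by
    set e : Module.Basis (Fin n) ℝ (EuclideanSpace ℝ (Fin n)) := (Pi.basisFun ℝ (Fin n)).map L.symm
      with he
    have hedet : e.det a = A.det := by
      have hem : e.toMatrix a = A := by
        ext i j
        simp only [e, Module.Basis.toMatrix_apply, Module.Basis.map_repr, LinearEquiv.symm_symm,
          LinearEquiv.trans_apply, Pi.basisFun_repr, hA, Matrix.of_apply]
        rfl
      rw [Module.Basis.det_apply, hem]
    rw [← hedet]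
    have hspan : Submodule.span ℝ (Set.range a) = ⊤ := hB ▸ B.span_eq
    exact ((Module.Basis.is_basis_iff_det e).mp ⟨ha, hspan⟩).ne_zero
  have hdetv : |detv a| = |A.det| := rfl
  set dA : ℝ := |A.det| with hdA
  have hdApos : 0 < dA := abs_pos.mpr hdet0
  set α : ℝ := ‖a i₀‖ with hα
  have hαle : ∀ i, α ≤ ‖a i‖ := fun i => hord i₀ i (by simp [hi₀, Fin.le_def])
  have hapos : ∀ i, 0 < ‖a i‖ := fun i => lt_of_lt_of_le h0 (hαle i)
  set P : ℝ := ∏ i, ‖a i‖ with hP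
  have hPpos : 0 < P := Finset.prod_pos fun i _ => hapos i
  clear_value dA P
  -- coordinates solve the linear system
  have hmulVec : ∀ y : EuclideanSpace ℝ (Fin n), A.mulVec (B.repr y : Fin n → ℝ) = L y := by
    intro y
    funext k
    set π : EuclideanSpace ℝ (Fin n) →ₗ[ℝ] ℝ :=
      (LinearMap.proj k).comp L.toLinearMap with hπ
    have hy := B.sum_repr y
    have h1 : π (∑ j, B.repr y j • B j) = π y := congrArg π hy
    rw [map_sum] at h1
    simp only [_root_.map_smul, smul_eq_mul] at h1
    have hπB : ∀ j, π (B j) = a j k := by intro j; rw [hB]; rfl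
    simp only [hπB] at h1
    calc (A.mulVec (B.repr y : Fin n → ℝ)) k = ∑ j, a j k * B.repr y j := by
          simp [Matrix.mulVec, dotProduct, hA]
      _ = π y := by rw [← h1]; exact Finset.sum_congr rfl fun j _ => mul_comm _ _
      _ = (L y) k := rfl
  have hcram : ∀ y : EuclideanSpace ℝ (Fin n),
      A.det • (B.repr y : Fin n → ℝ) = Matrix.cramer A (L y) := by
    intro y
    rw [← hmulVec y, Matrix.cramer_eq_adjugate_mulVec, Matrix.mulVec_mulVec,
      Matrix.adjugate_mul, Matrix.smul_mulVec, Matrix.one_mulVec]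
  -- the key coordinate bound
  have hKbound : ∀ (y : EuclideanSpace ℝ (Fin n)) (i), |B.repr y i| ≤ ‖y‖ * P / (α * dA) := by
    intro y i
    have h1 : A.det * B.repr y i = (A.updateCol i (L y)).det := by
      have := congrFun (hcram y) i
      simpa [Matrix.cramer_apply, smul_eq_mul] using this
    have h2 : |(A.updateCol i (L y)).det| ≤ ‖y‖ * ∏ j ∈ Finset.univ.erase i, ‖a j‖ := by
      have hM : A.updateCol i (L y) = Matrix.of fun k j => (Function.update a i y) j k := by
        ext k j
        rw [Matrix.updateCol_apply]
        show _ = (Function.update a i y) j k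
        rw [Function.update_apply]
        split_ifs <;> rfl
      rw [hM]
      have hHad := hadamard_ineq (Function.update a i y)
      have hprod : ∏ j, ‖Function.update a i y j‖ = ‖y‖ * ∏ j ∈ Finset.univ.erase i, ‖a j‖ := by
        rw [Finset.prod_congr rfl
          (fun j _ => Function.apply_update (fun _ v => ‖v‖) a i y j),
          Finset.prod_update_of_mem (Finset.mem_univ i),
          Finset.sdiff_singleton_eq_erase]
      rwa [hprod] at hHad
    have h3 : |B.repr y i| * dA ≤ ‖y‖ * ∏ j ∈ Finset.univ.erase i, ‖a j‖ := by
      have e1 : |B.repr y i| * dA = |A.det * B.repr y i| := by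
        rw [abs_mul, hdA]; ring
      rw [e1, h1]
      exact h2
    have h4 : ∏ j ∈ Finset.univ.erase i, ‖a j‖ = P / ‖a i‖ := by
      rw [hP, eq_div_iff (hapos i).ne', mul_comm]
      exact Finset.mul_prod_erase Finset.univ (fun j => ‖a j‖) (Finset.mem_univ i)
    rw [h4] at h3
    have h5 : ‖y‖ * (P / ‖a i‖) ≤ ‖y‖ * (P / α) := by
      have h5a : P / ‖a i‖ ≤ P / α := by
        rw [div_le_div_iff₀ (hapos i) h0]
        nlinarith [hαle i, hPpos]
      exact mul_le_mul_of_nonneg_left h5a (norm_nonneg y)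
    have h6 : |B.repr y i| * dA ≤ ‖y‖ * (P / α) := h3.trans h5
    have heq : ‖y‖ * P / (α * dA) = ‖y‖ * (P / α) / dA := by
      field_simp
    rw [heq]
    exact (le_div_iff₀ hdApos).mpr h6
  -- numeric constants
  set Nr : ℝ := (n : ℝ) with hNr
  have hNr1 : (1 : ℝ) ≤ Nr := by rw [hNr]; exact_mod_cast hn
  have hNrpos : (0 : ℝ) < Nr := lt_of_lt_of_le one_pos hNr1
  set pw : ℝ := 2 ^ (n - 1) with hpw
  have hpw1 : (1 : ℝ) ≤ pw := one_le_pow₀ one_le_two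
  set C : ℝ := Nr * (Nr + pw) * (P / dA) with hC
  have hCpos : 0 < C := by
    rw [hC]
    exact mul_pos (mul_pos hNrpos (by linarith)) (div_pos hPpos hdApos)
  rw [hdetv]
  set r₀ : ℝ := t * α / C with hr₀
  have hr₀pos : 0 < r₀ := div_pos (mul_pos ht h0) hCpos
  set c₀ : EuclideanSpace ℝ (Fin n) := ∑ j, (t / (2 * Nr)) • a j with hc₀def
  have hc₀ : ∀ i, B.repr c₀ i = t / (2 * Nr) := by
    intro i
    have h1 : c₀ = ∑ j, (fun _ : Fin n => t / (2 * Nr)) j • B j := by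
      rw [hB]
    rw [h1, B.repr_sum_self]
  -- epsilon bound
  set ε : ℝ := r₀ * (P / (α * dA)) with hε
  have hεval : ε = t / (Nr * (Nr + pw)) := by
    rw [hε, hr₀, hC]
    field_simp
  have h2Nr : (0:ℝ) < 2 * Nr := by linarith
  have hprodpos : (0:ℝ) < Nr * (Nr + pw) := mul_pos hNrpos (by linarith)
  have hkey2 : 2 * Nr ≤ Nr * (Nr + pw) := by
    nlinarith [mul_nonneg hNrpos.le (show (0:ℝ) ≤ Nr + pw - 2 by linarith)]
  have hεle : ε ≤ t / (2 * Nr) := by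
    rw [hεval, div_le_div_iff₀ hprodpos h2Nr]
    nlinarith [mul_nonneg ht.le (sub_nonneg.mpr hkey2)]
  have hNε : Nr * ε ≤ t / 2 := by
    rw [hεval, mul_div_assoc', div_le_div_iff₀ hprodpos (by norm_num : (0:ℝ) < 2)]
    nlinarith [mul_nonneg ht.le (sub_nonneg.mpr hkey2)]
  -- the simplex
  set SX : Set (EuclideanSpace ℝ (Fin n)) :=
    convexHull ℝ (insert 0 (Set.range fun i => t • a i)) with hSX
  -- ball inclusion
  have hball : Metric.closedBall c₀ r₀ ⊆ SX := by
    intro x hx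
    have hxc : ‖x - c₀‖ ≤ r₀ := by rwa [Metric.mem_closedBall, dist_eq_norm] at hx
    have hsc : ∀ i, |B.repr x i - t / (2 * Nr)| ≤ ε := by
      intro i
      have h1 : B.repr x i - t / (2 * Nr) = B.repr (x - c₀) i := by
        rw [map_sub, Finsupp.coe_sub, Pi.sub_apply, hc₀ i]
      rw [h1]
      calc |B.repr (x - c₀) i| ≤ ‖x - c₀‖ * P / (α * dA) := hKbound _ i
        _ ≤ r₀ * P / (α * dA) := by gcongr
        _ = ε := by rw [hε, mul_div_assoc]
    have hs0 : ∀ i, 0 ≤ B.repr x i := by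
      intro i
      have h1 := (abs_le.mp (hsc i)).1
      have h2 : ε ≤ t / (2 * Nr) := hεle
      linarith
    have hssum : ∑ i, B.repr x i ≤ t := by
      have h1 : ∑ i, B.repr x i ≤ ∑ _i : Fin n, (t / (2 * Nr) + ε) := by
        refine Finset.sum_le_sum fun i _ => ?_
        have := (abs_le.mp (hsc i)).2
        linarith
      rw [Finset.sum_const, Finset.card_univ, Fintype.card_fin, nsmul_eq_mul] at h1
      have h2 : Nr * (t / (2 * Nr) + ε) ≤ t := by
        have h3 : Nr * (t / (2 * Nr)) = t / 2 := by field_simp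
        calc Nr * (t / (2 * Nr) + ε) = Nr * (t / (2 * Nr)) + Nr * ε := by ring
          _ ≤ t / 2 + t / 2 := by rw [h3]; linarith
          _ = t := by ring
      rw [← hNr] at h1
      exact h1.trans h2
    -- convex combination
    set w : Option (Fin n) → ℝ :=
      fun o => o.elim (1 - (∑ i, B.repr x i) / t) (fun i => B.repr x i / t) with hw
    set z : Option (Fin n) → EuclideanSpace ℝ (Fin n) :=
      fun o => o.elim 0 (fun i => t • a i) with hz
    have hsumw : ∑ o : Option (Fin n), w o = 1 := by
      rw [univ_option, Finset.sum_insertNone]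
      simp only [hw, Option.elim]
      rw [← Finset.sum_div]
      ring
    have hw₀ : ∀ o ∈ Finset.univ, 0 ≤ w o := by
      rintro (_ | i) _
      · have : (∑ i, B.repr x i) / t ≤ 1 := by
          rw [div_le_one ht]
          exact hssum
        simpa [hw] using by linarith
      · have := hs0 i
        simp only [hw, Option.elim]
        positivity
    have hzmem : ∀ o ∈ Finset.univ, z o ∈ insert 0 (Set.range fun i => t • a i) := by
      rintro (_ | i) _
      · exact Set.mem_insert _ _
      · exact Set.mem_insert_of_mem _ ⟨i, rfl⟩
    have hxeq : Finset.univ.centerMass w z = x := by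
      rw [Finset.centerMass_eq_of_sum_1 _ _ hsumw]
      rw [univ_option, Finset.sum_insertNone]
      have h1 : ∀ i, w (some i) • z (some i) = B.repr x i • a i := by
        intro i
        simp only [hw, hz, Option.elim]
        rw [smul_smul, div_mul_cancel₀ _ ht.ne']
      calc w none • z none + ∑ i, w (some i) • z (some i)
          = ∑ i, B.repr x i • a i := by
            simp only [hz, Option.elim, smul_zero, zero_add]
            exact Finset.sum_congr rfl fun i _ => h1 i
        _ = ∑ i, B.repr x i • B i := by rw [hB]
        _ = x := B.sum_repr x
    rw [hSX, ← hxeq]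
    exact Finset.centerMass_mem_convexHull _ hw₀ (by rw [hsumw]; exact one_pos) hzmem
  -- conclude via sSup
  rw [show inradius SX = sSup {r : ℝ | 0 ≤ r ∧ ∃ c, Metric.closedBall c r ⊆ SX} from rfl]
  have hmem : r₀ ∈ {r : ℝ | 0 ≤ r ∧ ∃ c, Metric.closedBall c r ⊆ SX} :=
    ⟨hr₀pos.le, c₀, hball⟩
  have hbdd : BddAbove {r : ℝ | 0 ≤ r ∧ ∃ c, Metric.closedBall c r ⊆ SX} := by
    have hfin : (insert 0 (Set.range fun i => t • a i)).Finite :=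
      (Set.finite_range _).insert 0
    have hbSX : Bornology.IsBounded SX := by
      rw [hSX]
      exact isBounded_convexHull.mpr hfin.isBounded
    obtain ⟨R, hR⟩ := hbSX.subset_closedBall 0
    refine ⟨R + R, ?_⟩
    rintro r ⟨hr0, c, hc⟩
    set u : EuclideanSpace ℝ (Fin n) := α⁻¹ • a i₀ with hu
    have hunorm : ‖u‖ = 1 := by
      rw [hu, norm_smul, Real.norm_eq_abs, abs_inv, abs_of_pos h0, ← hα,
        inv_mul_cancel₀ h0.ne']
    have h1 : c ∈ Metric.closedBall (0 : EuclideanSpace ℝ (Fin n)) R :=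
      hR (hc (Metric.mem_closedBall_self hr0))
    have h2 : c + r • u ∈ Metric.closedBall c r := by
      rw [Metric.mem_closedBall, dist_self_add_left, norm_smul, Real.norm_eq_abs,
        abs_of_nonneg hr0, hunorm, mul_one]
    have h3 : c + r • u ∈ Metric.closedBall (0 : EuclideanSpace ℝ (Fin n)) R := hR (hc h2)
    rw [Metric.mem_closedBall] at h1 h3
    have h4 : r = dist (c + r • u) c := by
      rw [dist_self_add_left, norm_smul, Real.norm_eq_abs, abs_of_nonneg hr0, hunorm, mul_one]
    calc r = dist (c + r • u) c := h4
      _ ≤ dist (c + r • u) 0 + dist 0 c := dist_triangle _ _ _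
      _ ≤ R + R := add_le_add h3 (by rwa [dist_comm])
  exact le_csSup hbdd hmem
end

section
/- Let K ⊂ ℝ^n be a compact convex body with smooth boundary, B a closed ball containing K, and x a point illuminating a boundary point z of B whose outward normal equals the outward normal at some boundary point y of K. Then x also illuminates y. Consequently, any finite set illuminating B illuminates K. -/
open MeasureTheory Metric Set
open scoped ENNReal

/-- An interior point satisfies any supporting inequality strictly. -/
lemma aux_inner_lt_of_interior {n : ℕ} {u q : EuclideanSpace ℝ (Fin n)}
    {A : Set (EuclideanSpace ℝ (Fin n))} {m : ℝ} (hu : ‖u‖ = 1)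
    (hA : ∀ w ∈ A, (inner ℝ u w : ℝ) ≤ m) (hq : q ∈ interior A) : (inner ℝ u q : ℝ) < m := by
  obtain ⟨ε, hε, hball⟩ := Metric.isOpen_iff.mp isOpen_interior q hq
  have h1 : q + (ε / 2) • u ∈ A := by
    refine interior_subset (hball ?_)
    have hd : dist (q + (ε / 2) • u) q = ε / 2 := by
      rw [dist_eq_norm, add_sub_cancel_left, norm_smul, hu, mul_one]
      exact abs_of_pos (by linarith)
    rw [Metric.mem_ball, hd]; linarith
  have h2 := hA _ h1
  have h3 : (inner ℝ u (q + (ε / 2) • u) : ℝ) = inner ℝ u q + ε / 2 := by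
    rw [inner_add_right, real_inner_smul_right, real_inner_self_eq_norm_sq, hu]
    ring
  rw [h3] at h2; linarith

lemma aux_line_convex {n : ℕ} (x y : EuclideanSpace ℝ (Fin n)) :
    Convex ℝ (lineThrough x y) := by
  rintro p ⟨t₁, rfl⟩ q ⟨t₂, rfl⟩ a b _ _ hab
  obtain rfl : b = 1 - a := by linarith
  refine ⟨a * t₁ + (1 - a) * t₂, ?_⟩
  match_scalars <;> ring

/-- Core lemma: illumination transfers from the ball to the body. -/
lemma aux_core {n : ℕ} (K : Set (EuclideanSpace ℝ (Fin n)))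
    (hconv : Convex ℝ K) (hcomp : IsCompact K) (hint : (interior K).Nonempty)
    (hsm : SmoothBody K) (c : EuclideanSpace ℝ (Fin n)) (R : ℝ) (hR : 0 < R)
    (hKB : K ⊆ Metric.closedBall c R) (x y z u : EuclideanSpace ℝ (Fin n))
    (hy : y ∈ frontier K) (hzc : z ∈ Metric.closedBall c R) (hu : ‖u‖ = 1)
    (hyK : ∀ w ∈ K, (inner ℝ u w : ℝ) ≤ inner ℝ u y)
    (hzB : ∀ w ∈ Metric.closedBall c R, (inner ℝ u w : ℝ) ≤ inner ℝ u z)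
    (hx : Illum (Metric.closedBall c R) x z) : Illum K x y := by
  obtain ⟨hseg, p, ⟨t, rfl⟩, hpB⟩ := hx
  have hBconv : Convex ℝ (Metric.closedBall c R) := convex_closedBall c R
  have hyKmem : y ∈ K := hcomp.isClosed.frontier_subset hy
  -- inner ℝ u p < inner ℝ u z
  have hpz : (inner ℝ u (x + t • (z - x)) : ℝ) < inner ℝ u z :=
    aux_inner_lt_of_interior hu hzB hpB
  have hsegne : segment ℝ x z ∩ interior (Metric.closedBall c R) = ∅ := hseg
  rw [Set.eq_empty_iff_forall_notMem] at hsegne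
  -- t > 1
  have ht1 : 1 < t := by
    rcases lt_or_ge 1 t with ht | ht
    · exact ht
    rcases le_or_gt 0 t with ht0 | ht0
    · -- p ∈ segment x z, contradiction
      exfalso
      refine hsegne (x + t • (z - x)) ⟨⟨1 - t, t, by linarith, ht0, by ring, ?_⟩, hpB⟩
      match_scalars <;> ring
    · -- t < 0 : x ∈ interior B, contradiction
      exfalso
      set s : ℝ := 1 / (1 - t) with hs
      have h1t : (0:ℝ) < 1 - t := by linarith
      have hs0 : (0:ℝ) < s := by positivity
      have hs1 : s < 1 := by rw [hs, div_lt_one h1t]; linarith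
      have hsid : s * (1 - t) = 1 := by rw [hs]; exact one_div_mul_cancel h1t.ne'
      have hxint : x ∈ interior (Metric.closedBall c R) := by
        have hcomb := hBconv.combo_interior_closure_mem_interior hpB
          (subset_closure hzc) hs0 (by linarith : (0:ℝ) ≤ 1 - s) (by ring)
        have hxeq : s • (x + t • (z - x)) + (1 - s) • z = x := by
          match_scalars
          · linear_combination hsid
          · linear_combination -hsid
        rwa [hxeq] at hcomb
      exact hsegne x ⟨left_mem_segment ℝ x z, hxint⟩
  -- inner ℝ u x > inner ℝ u z ≥ inner ℝ u y
  have hxz : (inner ℝ u z : ℝ) < inner ℝ u x := by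
    have hexp : (inner ℝ u (x + t • (z - x)) : ℝ)
        = inner ℝ u x + t * (inner ℝ u z - inner ℝ u x) := by
      rw [inner_add_right, real_inner_smul_right, inner_sub_right]
    rw [hexp] at hpz
    nlinarith
  have hyz : (inner ℝ u y : ℝ) ≤ inner ℝ u z := hzB y (hKB hyKmem)
  have hxy : (inner ℝ u y : ℝ) < inner ℝ u x := lt_of_le_of_lt hyz hxz
  constructor
  · -- segment [x,y] misses interior K
    rw [Set.eq_empty_iff_forall_notMem]
    rintro q ⟨⟨a, b, ha, hb, hab, rfl⟩, hqK⟩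
    have h1 : (inner ℝ u (a • x + b • y) : ℝ) = a * inner ℝ u x + b * inner ℝ u y := by
      rw [inner_add_right, real_inner_smul_right, real_inner_smul_right]
    have h2 : (inner ℝ u (a • x + b • y) : ℝ) < inner ℝ u y :=
      aux_inner_lt_of_interior hu hyK hqK
    rw [h1] at h2
    have h5 : 0 ≤ a * ((inner ℝ u x : ℝ) - inner ℝ u y) :=
      mul_nonneg ha (by linarith)
    rw [mul_sub] at h5
    have h6 : a * (inner ℝ u y : ℝ) + b * inner ℝ u y = inner ℝ u y := by
      rw [← add_mul, hab, one_mul]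
    linarith
  · -- line through x,y meets interior K
    by_contra hne
    rw [Set.not_nonempty_iff_eq_empty] at hne
    have hdisj : Disjoint (interior K) (lineThrough x y) := by
      rw [Set.disjoint_iff_inter_eq_empty, Set.inter_comm]; exact hne
    obtain ⟨f, σ, hf₁, hf₂⟩ := geometric_hahn_banach_open hconv.interior isOpen_interior
      (aux_line_convex x y) hdisj
    have hxline : x ∈ lineThrough x y := ⟨0, by simp⟩
    have hyline : y ∈ lineThrough x y := ⟨1, by simp⟩
    have hσx : σ ≤ f x := hf₂ x hxline
    have hσy : σ ≤ f y := hf₂ y hyline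
    -- f x = f y
    have hfxy : f x = f y := by
      by_contra hd
      have hd' : f y - f x ≠ 0 := fun h => hd (by linarith [sub_eq_zero.mp h])
      set t₀ : ℝ := (σ - 1 - f x) / (f y - f x) with ht₀
      have hmem : x + t₀ • (y - x) ∈ lineThrough x y := ⟨t₀, rfl⟩
      have := hf₂ _ hmem
      have hval : f (x + t₀ • (y - x)) = σ - 1 := by
        rw [f.map_add, f.map_smul, f.map_sub, smul_eq_mul, ht₀]
        field_simp
        ring
      rw [hval] at this; linarith
    -- ∀ v ∈ K, f v ≤ f y
    obtain ⟨w0, hw0⟩ := hint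
    have hKle : ∀ v ∈ K, f v ≤ f y := by
      intro v hv
      have hlim : Filter.Tendsto (fun s : ℝ => f v + s * (f w0 - f v))
          (nhdsWithin 0 (Set.Ioi 0)) (nhds (f v)) := by
        have hc : Continuous (fun s : ℝ => f v + s * (f w0 - f v)) := by continuity
        have := hc.tendsto 0
        simpa using this.mono_left nhdsWithin_le_nhds
      refine le_of_tendsto hlim ?_
      filter_upwards [Ioo_mem_nhdsGT_of_mem (by norm_num : (0:ℝ) ∈ Set.Ico (0:ℝ) 1)]
        with s hs
      have hmem : v + s • (w0 - v) ∈ interior K :=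
        hconv.add_smul_sub_mem_interior hv hw0 ⟨hs.1, le_of_lt hs.2⟩
      have hval : f (v + s • (w0 - v)) = f v + s * (f w0 - f v) := by
        rw [f.map_add, f.map_smul, f.map_sub, smul_eq_mul]
      have := hf₁ _ hmem
      rw [hval] at this
      linarith
    -- translate f into an inner product
    set w : EuclideanSpace ℝ (Fin n) := (InnerProductSpace.toDual ℝ _).symm f with hw
    have hwf : ∀ v, (inner ℝ w v : ℝ) = f v := fun v =>
      InnerProductSpace.toDual_symm_apply
    have hfw0 : f w0 < f y := lt_of_lt_of_le (hf₁ w0 hw0) hσy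
    have hwne : w ≠ 0 := by
      intro h0
      have h1 := hwf w0
      have h2 := hwf y
      rw [h0, inner_zero_left] at h1 h2
      rw [← h1, ← h2] at hfw0
      exact lt_irrefl _ hfw0
    have hnw : 0 < ‖w‖ := norm_pos_iff.mpr hwne
    set u2 : EuclideanSpace ℝ (Fin n) := ‖w‖⁻¹ • w with hu2def
    have hu2 : ‖u2‖ = 1 := by
      rw [hu2def, norm_smul, norm_inv, norm_norm, inv_mul_cancel₀ hnw.ne']
    have hu2sup : ∀ v ∈ K, (inner ℝ u2 v : ℝ) ≤ inner ℝ u2 y := by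
      intro v hv
      rw [hu2def, real_inner_smul_left, real_inner_smul_left, hwf, hwf]
      exact mul_le_mul_of_nonneg_left (hKle v hv) (inv_nonneg.mpr hnw.le)
    obtain ⟨u₀, _, huniq⟩ := hsm y hy
    have e1 : u = u₀ := huniq u ⟨hu, hyK⟩
    have e2 : u2 = u₀ := huniq u2 ⟨hu2, hu2sup⟩
    have hfin : (inner ℝ u x : ℝ) = inner ℝ u y := by
      rw [e1, ← e2, hu2def, real_inner_smul_left, real_inner_smul_left, hwf, hwf, hfxy]
    linarith

/-- If x illuminates the boundary point z of a ball B ⊇ K whose outward unit normal agrees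
with the outward unit normal at a boundary point y of K, then x illuminates y; consequently,
any finite set illuminating B illuminates K. -/
theorem illum_ball_implies_illum_body {n : ℕ} (K : Set (EuclideanSpace ℝ (Fin n)))
    (hconv : Convex ℝ K) (hcomp : IsCompact K) (hint : (interior K).Nonempty)
    (hsm : SmoothBody K) (c : EuclideanSpace ℝ (Fin n)) (R : ℝ) (hR : 0 < R)
    (hKB : K ⊆ Metric.closedBall c R) (x y z u : EuclideanSpace ℝ (Fin n))
    (hy : y ∈ frontier K) (hz : z ∈ frontier (Metric.closedBall c R)) (hu : ‖u‖ = 1)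
    (hyK : ∀ w ∈ K, (inner ℝ u w : ℝ) ≤ inner ℝ u y)
    (hzB : ∀ w ∈ Metric.closedBall c R, (inner ℝ u w : ℝ) ≤ inner ℝ u z)
    (hx : Illum (Metric.closedBall c R) x z) :
    Illum K x y ∧
      ∀ S : Finset (EuclideanSpace ℝ (Fin n)),
        IllumSet ↑S (Metric.closedBall c R) → IllumSet ↑S K := by
  have hzc : z ∈ Metric.closedBall c R :=
    Metric.isClosed_closedBall.frontier_subset hz
  refine ⟨aux_core K hconv hcomp hint hsm c R hR hKB x y z u hy hzc hu hyK hzB hx, ?_⟩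
  intro S hS y' hy'
  obtain ⟨u', ⟨hu'n, hu's⟩, _⟩ := hsm y' hy'
  set z' : EuclideanSpace ℝ (Fin n) := c + R • u' with hz'def
  have hdz' : dist z' c = R := by
    rw [hz'def, dist_eq_norm, add_sub_cancel_left, norm_smul, hu'n]
    simp [abs_of_pos hR]
  have hz'c : z' ∈ Metric.closedBall c R := by
    rw [Metric.mem_closedBall, hdz']
  have hz'f : z' ∈ frontier (Metric.closedBall c R) := by
    rw [frontier_closedBall c hR.ne']
    exact hdz'
  have hz'B : ∀ w ∈ Metric.closedBall c R, (inner ℝ u' w : ℝ) ≤ inner ℝ u' z' := by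
    intro w hw
    have h1 : (inner ℝ u' (w - c) : ℝ) ≤ R := by
      refine le_trans (real_inner_le_norm u' (w - c)) ?_
      rw [hu'n, one_mul, ← dist_eq_norm]
      exact Metric.mem_closedBall.mp hw
    have h2 : (inner ℝ u' z' : ℝ) = inner ℝ u' c + R := by
      rw [hz'def, inner_add_right, real_inner_smul_right, real_inner_self_eq_norm_sq, hu'n]
      ring
    have h3 : (inner ℝ u' w : ℝ) = inner ℝ u' c + inner ℝ u' (w - c) := by
      rw [inner_sub_right]; ring
    linarith
  obtain ⟨x', hx'S, hx'⟩ := hS z' hz'f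
  exact ⟨x', hx'S,
    aux_core K hconv hcomp hint hsm c R hR hKB x' y' z' u' hy' hz'c hu'n hu's hz'B hx'⟩
end

section
/- Let P be a compact convex polytope in ℝ^n containing a closed ball B in its interior. Then the set of vertices of P illuminates B. -/
open MeasureTheory Metric Set
open scoped ENNReal

/-- The vertices of a compact convex polytope containing a ball in its interior
illuminate the ball. -/
theorem polytope_vertices_illuminate_ball {n : ℕ} (V : Finset (EuclideanSpace ℝ (Fin n)))
    (P : Set (EuclideanSpace ℝ (Fin n))) (hP : P = convexHull ℝ ↑V)
    (c : EuclideanSpace ℝ (Fin n)) (R : ℝ) (hR : 0 < R)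
    (hB : Metric.closedBall c R ⊆ interior P) :
    IllumSet (Set.extremePoints ℝ P) (Metric.closedBall c R) := by
  intro y hy
  have hyS : ‖y - c‖ = R := by
    have := frontier_closedBall_subset_sphere hy
    rwa [mem_sphere_iff_norm] at this
  set u : EuclideanSpace ℝ (Fin n) := R⁻¹ • (y - c) with hu
  have hun : ‖u‖ = 1 := by
    rw [hu, norm_smul, hyS, Real.norm_eq_abs, abs_of_pos (inv_pos.2 hR)]
    field_simp
  have huyc : (inner ℝ u (y - c) : ℝ) = R := by
    rw [hu, real_inner_smul_left, real_inner_self_eq_norm_sq, hyS]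
    field_simp
  have hPc : IsCompact P := by rw [hP]; exact V.finite_toSet.isCompact_convexHull ℝ
  have hyP : y ∈ interior P := by
    apply hB
    rw [Metric.mem_closedBall, dist_eq_norm, hyS]
  set l : EuclideanSpace ℝ (Fin n) →L[ℝ] ℝ := innerSL ℝ u with hl
  have hPne : P.Nonempty := ⟨y, interior_subset hyP⟩
  obtain ⟨m, hmP, hm⟩ := hPc.exists_isMaxOn hPne l.continuous.continuousOn
  have hexp : IsExposed ℝ P (l.toExposed P) := ContinuousLinearMap.toExposed.isExposed
  have hBne : (l.toExposed P).Nonempty := ⟨m, hmP, fun z hz => hm hz⟩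
  obtain ⟨x, hx⟩ := (hexp.isCompact hPc).extremePoints_nonempty hBne
  have hxP : x ∈ l.toExposed P := extremePoints_subset hx
  obtain ⟨ε, hε, hball⟩ := Metric.isOpen_iff.1 isOpen_interior y hyP
  have hyu : y + (ε/2) • u ∈ P := by
    apply interior_subset
    apply hball
    rw [Metric.mem_ball, dist_eq_norm]
    simp only [add_sub_cancel_left, norm_smul, hun, Real.norm_eq_abs,
      abs_of_pos (by linarith : (0:ℝ) < ε/2), mul_one]
    linarith
  have hα : (0:ℝ) < inner ℝ u (x - y) := by
    have h1 : l (y + (ε/2) • u) ≤ l x := hxP.2 _ hyu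
    have h2 : l (y + (ε/2) • u) = l y + ε/2 := by
      simp only [hl, innerSL_apply_apply, inner_add_right, real_inner_smul_right,
        real_inner_self_eq_norm_sq, hun]
      ring
    have h3 : (inner ℝ u (x - y) : ℝ) = l x - l y := by
      simp only [hl, innerSL_apply_apply, inner_sub_right]
    rw [h3]
    linarith
  set α : ℝ := inner ℝ u (x - y) with hαdef
  refine ⟨x, hexp.isExtreme.extremePoints_subset_extremePoints hx, ?_, ?_⟩
  · -- segment misses interior of ball
    rw [Set.eq_empty_iff_forall_notMem]
    rintro z ⟨hzseg, hzint⟩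
    rw [interior_closedBall c hR.ne'] at hzint
    rw [Metric.mem_ball, dist_eq_norm] at hzint
    obtain ⟨a, b, ha, hb, hab, rfl⟩ := hzseg
    have hcalc : (inner ℝ u (a • x + b • y - c) : ℝ) = a * α + R := by
      have heq : a • x + b • y - c = a • (x - y) + (y - c) := by
        rw [show b = 1 - a by linarith]
        module
      rw [heq, inner_add_right, real_inner_smul_right, huyc, hαdef]
    have hle : (inner ℝ u (a • x + b • y - c) : ℝ) ≤ ‖a • x + b • y - c‖ := by
      have := real_inner_le_norm u (a • x + b • y - c)
      rwa [hun, one_mul] at this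
    nlinarith [mul_nonneg ha hα.le]
  · -- line meets interior of ball
    have hxy : x ≠ y := by
      intro h
      rw [hαdef, h, sub_self, inner_zero_right] at hα
      exact lt_irrefl 0 hα
    have hN0 : (0:ℝ) < ‖y - x‖ := norm_sub_pos_iff.2 hxy.symm
    set N : ℝ := ‖y - x‖ ^ 2 with hNdef
    have hN : (0:ℝ) < N := by positivity
    set s : ℝ := R * α / N with hs
    have hspos : 0 < s := by positivity
    have hsN : s * N = R * α := by rw [hs]; field_simp
    have hyc : y - c = R • u := by
      rw [hu, smul_smul, mul_inv_cancel₀ hR.ne', one_smul]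
    refine ⟨y + s • (y - x), ⟨1 + s, by module⟩, ?_⟩
    rw [interior_closedBall c hR.ne', Metric.mem_ball, dist_eq_norm]
    have hkey : ‖y + s • (y - x) - c‖ ^ 2 = R ^ 2 - 2 * s * (R * α) + s ^ 2 * N := by
      have heq : y + s • (y - x) - c = (y - c) + s • (y - x) := by abel
      rw [heq, norm_add_sq_real, hyS, real_inner_smul_right, norm_smul, mul_pow,
        Real.norm_eq_abs, sq_abs, ← hNdef]
      have hin : (inner ℝ (y - c) (y - x) : ℝ) = -(R * α) := by
        rw [hyc, real_inner_smul_left, show y - x = -(x - y) by abel, inner_neg_right, ← hαdef]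
        ring
      rw [hin]
      ring
    have hlt : ‖y + s • (y - x) - c‖ ^ 2 < R ^ 2 := by
      rw [hkey]
      have h4 : s ^ 2 * N = s * (R * α) := by rw [pow_two, mul_assoc, hsN]
      rw [h4]
      have h5 : 0 < s * (R * α) := mul_pos hspos (mul_pos hR hα)
      linarith
    exact lt_of_pow_lt_pow_left₀ 2 hR.le hlt
end

section
/- Let B be a closed ball of radius R in ℝ^n. For every ε > 0 there exists a set S of n+1 points in ℝ^n illuminating B such that max{‖x − y‖ : x ∈ S, y ∈ B} ≤ (n+1)·R + ε. -/
open MeasureTheory Metric Set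
open scoped ENNReal

/-- Key combinatorial fact: if the coordinates of `w` sum to zero, some coordinate
is at least `‖w‖ / √(n(n+1))` (stated in squared form). -/
lemma simplex_max_coord {n : ℕ} (hn : 0 < n) (w : EuclideanSpace ℝ (Fin (n+1)))
    (hsum : ∑ i, w i = 0) :
    ∃ i, 0 ≤ w i ∧ ‖w‖ ^ 2 ≤ (n * (n+1) : ℝ) * (w i) ^ 2 := by
  obtain ⟨i, -, hi⟩ := Finset.exists_max_image Finset.univ w Finset.univ_nonempty
  set M := w i with hM
  have hiM : ∀ j, w j ≤ M := fun j => hi j (Finset.mem_univ j)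
  have hM0 : 0 ≤ M := by
    by_contra h
    push_neg at h
    have : ∑ j, w j < 0 := by
      have : ∑ j, w j ≤ ∑ _j : Fin (n+1), M := Finset.sum_le_sum fun j _ => hiM j
      have hMn : ∑ _j : Fin (n+1), M = (n+1 : ℝ) * M := by
        simp [Finset.sum_const, mul_comm]
      nlinarith [this, hMn]
    linarith [hsum ▸ this]
  have hneg : ∃ j, w j ≤ 0 := by
    by_contra h
    push_neg at h
    have : 0 < ∑ j, w j := Finset.sum_pos (fun j _ => h j) Finset.univ_nonempty
    linarith [hsum ▸ this]
  have hb : ∀ j, -w j ≤ (n : ℝ) * M := by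
    intro j
    have h1 : w j + ∑ k ∈ Finset.univ.erase j, w k = ∑ k, w k :=
      Finset.add_sum_erase _ w (Finset.mem_univ j)
    have h2 : ∑ k ∈ Finset.univ.erase j, w k ≤ (Finset.univ.erase j).card • M :=
      Finset.sum_le_card_nsmul _ _ _ (fun k _ => hiM k)
    have h3 : (Finset.univ.erase j).card = n := by
      rw [Finset.card_erase_of_mem (Finset.mem_univ j)]
      simp
    rw [h3] at h2
    rw [hsum] at h1
    push_cast [nsmul_eq_mul] at h2 ⊢
    linarith
  set P := ∑ j, max (w j) 0 with hP
  have hPN : ∑ j, max (-w j) 0 = P := by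
    have : P - ∑ j, max (-w j) 0 = ∑ j, (max (w j) 0 - max (-w j) 0) := by
      rw [Finset.sum_sub_distrib]
    simp only [max_zero_sub_max_neg_zero_eq_self] at this
    rw [hsum] at this
    linarith
  have hPle : P ≤ (n : ℝ) * M := by
    obtain ⟨j0, hj0⟩ := hneg
    have h1 : max (w j0) 0 + ∑ k ∈ Finset.univ.erase j0, max (w k) 0
        = ∑ k, max (w k) 0 :=
      Finset.add_sum_erase _ (fun k => max (w k) 0) (Finset.mem_univ j0)
    rw [← hP] at h1
    have h2 : ∑ k ∈ Finset.univ.erase j0, max (w k) 0 ≤ (Finset.univ.erase j0).card • M :=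
      Finset.sum_le_card_nsmul _ _ _ (fun k _ => max_le (hiM k) hM0)
    have h3 : (Finset.univ.erase j0).card = n := by
      rw [Finset.card_erase_of_mem (Finset.mem_univ j0)]
      simp
    rw [h3, nsmul_eq_mul] at h2
    have h4 : max (w j0) 0 = 0 := max_eq_right hj0
    linarith
  have hterm : ∀ j, (w j) ^ 2 ≤ M * max (w j) 0 + ((n : ℝ) * M) * max (-w j) 0 := by
    intro j
    rcases le_or_gt 0 (w j) with h | h
    · rw [max_eq_left h, max_eq_right (by linarith)]
      nlinarith [hiM j]
    · rw [max_eq_right h.le, max_eq_left (by linarith)]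
      nlinarith [hb j]
  have hnormsq : ‖w‖ ^ 2 = ∑ j, (w j) ^ 2 := by
    rw [EuclideanSpace.norm_eq, Real.sq_sqrt (by positivity)]
    simp [sq_abs]
  refine ⟨i, hM0, ?_⟩
  have hsumle : ∑ j, (w j) ^ 2 ≤ M * P + ((n : ℝ) * M) * P := by
    calc ∑ j, (w j) ^ 2 ≤ ∑ j, (M * max (w j) 0 + ((n : ℝ) * M) * max (-w j) 0) :=
          Finset.sum_le_sum fun j _ => hterm j
      _ = M * P + ((n : ℝ) * M) * ∑ j, max (-w j) 0 := by
          rw [Finset.sum_add_distrib, ← Finset.mul_sum, ← Finset.mul_sum]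
      _ = M * P + ((n : ℝ) * M) * P := by rw [hPN]
  have hP0 : 0 ≤ P := Finset.sum_nonneg fun j _ => le_max_right _ _
  rw [hnormsq]
  have step1 : M * P + ((n : ℝ) * M) * P ≤ M * ((n:ℝ)*M) + ((n : ℝ) * M) * ((n:ℝ)*M) := by
    have hnM : 0 ≤ (n:ℝ) * M := by positivity
    have := mul_le_mul_of_nonneg_left hPle hM0
    have := mul_le_mul_of_nonneg_left hPle hnM
    linarith
  nlinarith [hsumle, step1]

/-- Existence of a regular simplex direction family in ℝⁿ. -/
lemma simplex_directions {n : ℕ} (hn : 0 < n) :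
    ∃ u : Fin (n+1) → EuclideanSpace ℝ (Fin n),
      Function.Injective u ∧ (∀ i, ‖u i‖ ^ 2 = (n : ℝ) / (n+1)) ∧
      ∀ v : EuclideanSpace ℝ (Fin n), ∃ i,
        0 ≤ (inner ℝ (u i) v : ℝ) ∧ ‖v‖ ^ 2 ≤ (n * (n+1) : ℝ) * (inner ℝ (u i) v : ℝ) ^ 2 := by
  classical
  -- the linear functional "sum of coordinates" on ℝ^{n+1}
  let L : EuclideanSpace ℝ (Fin (n+1)) →ₗ[ℝ] ℝ :=
    { toFun := fun x => ∑ i, x i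
      map_add' := by intro a b; exact Finset.sum_add_distrib
      map_smul' := by intro r a; simp [Finset.mul_sum] }
  have hL : ∀ x : EuclideanSpace ℝ (Fin (n+1)), L x = ∑ i, x i := fun x => rfl
  have hLsurj : LinearMap.range L = ⊤ := by
    rw [LinearMap.range_eq_top]
    intro r
    refine ⟨EuclideanSpace.single 0 r, ?_⟩
    rw [hL]
    simp [EuclideanSpace.single_apply]
  have hfr : Module.finrank ℝ (LinearMap.ker L) = n := by
    have h1 := LinearMap.finrank_range_add_finrank_ker L
    rw [hLsurj] at h1
    simp only [finrank_top, finrank_euclideanSpace_fin, Module.finrank_self] at h1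
    omega
  let B := (stdOrthonormalBasis ℝ (LinearMap.ker L)).reindex (finCongr hfr)
  let g : (LinearMap.ker L) ≃ₗᵢ[ℝ] EuclideanSpace ℝ (Fin n) := B.repr
  -- the simplex vertices in the hyperplane
  let p : EuclideanSpace ℝ (Fin (n+1)) := WithLp.toLp 2 (fun _ => (1:ℝ)/(n+1))
  have hw : ∀ i : Fin (n+1), L (EuclideanSpace.single i 1 - p) = 0 := by
    intro i
    rw [hL]
    have : ∀ j, (EuclideanSpace.single i 1 - p : EuclideanSpace ℝ (Fin (n+1))) j
        = (if j = i then 1 else 0) - 1/(n+1) := by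
      intro j
      simp [p, EuclideanSpace.single_apply, PiLp.sub_apply]
    rw [Finset.sum_congr rfl fun j _ => this j, Finset.sum_sub_distrib]
    simp
    field_simp
    norm_num
  let wK : Fin (n+1) → LinearMap.ker L := fun i => ⟨EuclideanSpace.single i 1 - p, hw i⟩
  refine ⟨fun i => g (wK i), ?_, ?_, ?_⟩
  · intro i j hij
    have h1 : wK i = wK j := g.injective hij
    have h2 : (EuclideanSpace.single i 1 - p : EuclideanSpace ℝ (Fin (n+1)))
        = EuclideanSpace.single j 1 - p := congrArg Subtype.val h1
    have h3 : (EuclideanSpace.single i 1 : EuclideanSpace ℝ (Fin (n+1)))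
        = EuclideanSpace.single j 1 := by
      have := congrArg (· + p) h2
      simpa using this
    by_contra hne
    have := congrArg (fun x : EuclideanSpace ℝ (Fin (n+1)) => x i) h3
    simp [EuclideanSpace.single_apply, hne, Ne.symm hne] at this
  · intro i
    rw [g.norm_map]
    have hc : ‖wK i‖ = ‖(EuclideanSpace.single i 1 - p : EuclideanSpace ℝ (Fin (n+1)))‖ := rfl
    rw [hc, EuclideanSpace.norm_eq, Real.sq_sqrt (by positivity)]
    have : ∀ j, ‖(EuclideanSpace.single i 1 - p : EuclideanSpace ℝ (Fin (n+1))) j‖ ^ 2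
        = (if j = i then (1 - 1/(n+1:ℝ))^2 else (1/(n+1:ℝ))^2) := by
      intro j
      rw [Real.norm_eq_abs, sq_abs]
      by_cases h : j = i <;> simp [p, EuclideanSpace.single_apply, PiLp.sub_apply, h] <;> ring
    have hsplit : ∀ j : Fin (n+1), (if j = i then (1 - 1/(n+1:ℝ))^2 else (1/(n+1:ℝ))^2)
        = (if j = i then (1 - 1/(n+1:ℝ))^2 - (1/(n+1:ℝ))^2 else 0) + (1/(n+1:ℝ))^2 := by
      intro j; split <;> ring
    rw [Finset.sum_congr rfl fun j _ => this j,
      Finset.sum_congr rfl fun j _ => hsplit j, Finset.sum_add_distrib,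
      Finset.sum_ite_eq' Finset.univ i, Finset.sum_const, Finset.card_univ,
      Fintype.card_fin, nsmul_eq_mul]
    simp only [Finset.mem_univ, if_true]
    have hne : (n : ℝ) + 1 ≠ 0 := by positivity
    push_cast
    field_simp
    ring
  · intro v
    set a := g.symm v with ha
    have hsum : ∑ j, (a : EuclideanSpace ℝ (Fin (n+1))) j = 0 := a.2
    obtain ⟨i, hi0, hile⟩ := simplex_max_coord hn _ hsum
    have hinner : (inner ℝ (g (wK i)) v : ℝ) = (a : EuclideanSpace ℝ (Fin (n+1))) i := by
      have h1 : (inner ℝ (g (wK i)) v : ℝ) = inner ℝ (wK i) a := by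
        rw [ha, ← g.inner_map_map (wK i) (g.symm v), g.apply_symm_apply]
      rw [h1, Submodule.coe_inner]
      have h2 : (inner ℝ ((wK i : EuclideanSpace ℝ (Fin (n+1)))) 
          ((a : EuclideanSpace ℝ (Fin (n+1)))) : ℝ)
          = ∑ j, ((if j = i then 1 else 0) - 1/(n+1:ℝ)) * (a : EuclideanSpace ℝ (Fin (n+1))) j := by
        rw [PiLp.inner_apply]
        apply Finset.sum_congr rfl
        intro j _
        simp [wK, p, EuclideanSpace.single_apply, PiLp.sub_apply, RCLike.inner_apply]
        ring
      rw [h2]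
      have h3 : ∀ j, ((if j = i then 1 else 0) - 1/(n+1:ℝ)) * (a : EuclideanSpace ℝ (Fin (n+1))) j
          = (if j = i then (a : EuclideanSpace ℝ (Fin (n+1))) j else 0)
            - 1/(n+1:ℝ) * (a : EuclideanSpace ℝ (Fin (n+1))) j := by
        intro j
        by_cases h : j = i <;> simp [h] <;> ring
      rw [Finset.sum_congr rfl fun j _ => h3 j, Finset.sum_sub_distrib,
        ← Finset.mul_sum, hsum]
      simp [Finset.sum_ite_eq']
    refine ⟨i, ?_, ?_⟩
    · rw [hinner]; exact hi0
    · rw [hinner]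
      have : ‖v‖ = ‖(a : EuclideanSpace ℝ (Fin (n+1)))‖ := by
        rw [ha]
        rw [← g.symm.norm_map v]
        rfl
      rw [this]
      exact hile

lemma norm_add_smul_sq {E : Type*} [NormedAddCommGroup E] [InnerProductSpace ℝ E]
    (a b : E) (r : ℝ) :
    ‖a + r • b‖ ^ 2 = ‖a‖ ^ 2 + 2 * (r * (inner ℝ a b : ℝ)) + r ^ 2 * ‖b‖ ^ 2 := by
  rw [norm_add_sq_real, real_inner_smul_right, norm_smul, mul_pow, Real.norm_eq_abs, sq_abs]

lemma seg_param {E : Type*} [AddCommGroup E] [Module ℝ E] (c d v : E) (θ : ℝ) :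
    (c + v) + θ • ((c + d) - (c + v)) - c = v + θ • (d - v) := by module

lemma line_param {E : Type*} [AddCommGroup E] [Module ℝ E] (c d v : E) (s : ℝ) :
    (c + d) + (1 + s) • ((c + v) - (c + d)) - c = v + (-s) • (d - v) := by module


set_option maxHeartbeats 1600000 in
/-- A ball of radius R can be illuminated by n+1 points at distance at most (n+1)R + ε. -/
theorem ball_illumination_distance {n : ℕ} (hn : 0 < n) (c : EuclideanSpace ℝ (Fin n))
    (R : ℝ) (hR : 0 < R) (ε : ℝ) (hε : 0 < ε) :
    ∃ S : Finset (EuclideanSpace ℝ (Fin n)), S.card = n + 1 ∧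
      IllumSet ↑S (Metric.closedBall c R) ∧
      ∀ x ∈ S, ∀ y ∈ Metric.closedBall c R, dist x y ≤ (n + 1) * R + ε := by
  classical
  obtain ⟨u, huinj, hunorm, hucov⟩ := simplex_directions hn
  have hn' : (0:ℝ) < n := by exact_mod_cast hn
  set t : ℝ := (n * R + ε) * Real.sqrt ((n+1) / n) with ht
  have ht0 : 0 < t := by
    apply mul_pos (by positivity)
    apply Real.sqrt_pos.mpr
    positivity
  have htsq : t ^ 2 = (n * R + ε)^2 * ((n+1)/n) := by
    rw [ht, mul_pow, Real.sq_sqrt (by positivity)]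
  -- norm of points from center
  have hdnorm : ∀ i, ‖t • u i‖ = n * R + ε := by
    intro i
    rw [norm_smul, Real.norm_eq_abs, abs_of_pos ht0]
    have h1 : (t * ‖u i‖)^2 = ((n:ℝ)*R+ε)^2 := by
      rw [mul_pow, htsq, hunorm i]
      field_simp
    have h2 : 0 ≤ t * ‖u i‖ := by positivity
    calc t * ‖u i‖ = Real.sqrt ((t * ‖u i‖)^2) := (Real.sqrt_sq h2).symm
      _ = Real.sqrt (((n:ℝ)*R+ε)^2) := by rw [h1]
      _ = (n:ℝ)*R+ε := Real.sqrt_sq (by positivity)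
  -- the key strict inequality
  have key : ∀ q : ℝ, 0 ≤ q → R^2 ≤ ((n:ℝ)*(n+1))*q^2 → R^2 < t*q := by
    intro q hq h
    have h1 : 0 ≤ t*q := by positivity
    have e2 : (t*q)^2 * (n:ℝ)^2 = ((n:ℝ)*R+ε)^2 * (((n:ℝ)*(n+1)) * q^2) := by
      rw [mul_pow, htsq]
      field_simp
    have h2 : (R^2)^2 * (n:ℝ)^2 < (t*q)^2 * (n:ℝ)^2 := by
      rw [e2]
      calc (R^2)^2*(n:ℝ)^2 = ((n:ℝ)*R)^2 * R^2 := by ring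
        _ < ((n:ℝ)*R+ε)^2 * R^2 := by
            have hnR : 0 < (n:ℝ)*R := mul_pos hn' hR
            have hsq : ((n:ℝ)*R)^2 < ((n:ℝ)*R+ε)^2 := by nlinarith
            exact mul_lt_mul_of_pos_right hsq (by positivity)
        _ ≤ ((n:ℝ)*R+ε)^2 * (((n:ℝ)*(n+1))*q^2) := by nlinarith
    have h3 : (R^2)^2 < (t*q)^2 := by
      have hn2 : (0:ℝ) < (n:ℝ)^2 := by positivity
      exact lt_of_mul_lt_mul_right h2 hn2.le
    exact lt_of_pow_lt_pow_left₀ 2 h1 h3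
  -- the point set
  refine ⟨Finset.image (fun i => c + t • u i) Finset.univ, ?_, ?_, ?_⟩
  · rw [Finset.card_image_of_injective _ ?_, Finset.card_univ, Fintype.card_fin]
    intro i j hij
    apply huinj
    have := add_left_cancel hij
    exact smul_right_injective _ ht0.ne' this
  · -- illumination
    intro y hy
    rw [frontier_closedBall c hR.ne'] at hy
    set v : EuclideanSpace ℝ (Fin n) := y - c with hv
    have hvnorm : ‖v‖ = R := by
      rw [hv, ← dist_eq_norm]
      exact mem_sphere.mp hy
    have hy' : y = c + v := by rw [hv]; abel
    obtain ⟨i, hq0, hqle⟩ := hucov v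
    rw [hvnorm] at hqle
    have hkey : R^2 < t * (inner ℝ (u i) v : ℝ) := key _ hq0 hqle
    set d : EuclideanSpace ℝ (Fin n) := t • u i with hd
    have hdv : (inner ℝ d v : ℝ) = t * (inner ℝ (u i) v : ℝ) := real_inner_smul_left _ _ _
    set A : ℝ := (inner ℝ v (d - v) : ℝ) with hA
    have hA0 : 0 < A := by
      rw [hA, inner_sub_right, real_inner_self_eq_norm_sq, hvnorm, real_inner_comm, hdv]
      linarith
    refine ⟨c + d, Finset.mem_coe.mpr (Finset.mem_image_of_mem _ (Finset.mem_univ i)), ?_, ?_⟩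
    · -- segment misses interior
      rw [interior_closedBall c hR.ne', eq_empty_iff_forall_notMem]
      rintro z ⟨hz1, hz2⟩
      rw [segment_symm, segment_eq_image' ℝ y (c + d)] at hz1
      obtain ⟨θ, ⟨hθ0, hθ1⟩, hzeq⟩ := hz1
      have hzc : z - c = v + θ • (d - v) := by
        rw [← hzeq, hy']
        exact seg_param c d v θ
      have hnormz : ‖z - c‖^2 = R^2 + 2*(θ*A) + θ^2 * ‖d - v‖^2 := by
        rw [hzc, norm_add_smul_sq, hvnorm, hA]
      have hzball : ‖z - c‖ < R := by
        rw [← dist_eq_norm]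
        exact mem_ball.mp hz2
      have : ‖z - c‖^2 < R^2 := by
        have h0 : 0 ≤ ‖z - c‖ := norm_nonneg _
        nlinarith
      nlinarith [sq_nonneg θ, sq_nonneg ‖d - v‖, mul_nonneg hθ0 hA0.le,
        mul_nonneg (mul_nonneg hθ0 hθ0) (sq_nonneg ‖d - v‖)]
    · -- line meets interior
      set B : ℝ := ‖d - v‖^2 with hB
      have hdvne : d - v ≠ 0 := by
        intro h
        rw [hA, h, inner_zero_right] at hA0
        exact lt_irrefl 0 hA0
      have hB0 : 0 < B := by
        rw [hB]
        exact pow_pos (norm_pos_iff.mpr hdvne) 2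
      refine ⟨(c + d) + (1 + A/B) • (y - (c + d)), ⟨1 + A/B, rfl⟩, ?_⟩
      rw [interior_closedBall c hR.ne', mem_ball, dist_eq_norm]
      have hzc : (c + d) + (1 + A/B) • (y - (c + d)) - c = v + (-(A/B)) • (d - v) := by
        rw [hy']
        exact line_param c d v (A/B)
      rw [hzc]
      have hnormz : ‖v + (-(A/B)) • (d - v)‖^2
          = R^2 + 2*((-(A/B))*A) + (-(A/B))^2 * B := by
        rw [norm_add_smul_sq, hvnorm, hA, hB]
      have hval : R^2 + 2*((-(A/B))*A) + (-(A/B))^2 * B = R^2 - A^2/B := by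
        field_simp
        ring
      have hlt : ‖v + (-(A/B)) • (d - v)‖^2 < R^2 := by
        rw [hnormz, hval]
        have : 0 < A^2/B := by positivity
        linarith
      exact lt_of_pow_lt_pow_left₀ 2 hR.le hlt
  · -- distance bound
    intro x hx y hy
    rw [Finset.mem_image] at hx
    obtain ⟨i, -, rfl⟩ := hx
    have h1 : dist (c + t • u i) y ≤ dist (c + t • u i) c + dist c y := dist_triangle _ _ _
    have h2 : dist (c + t • u i) c = ‖t • u i‖ := by
      rw [dist_eq_norm]
      simp
    have h3 : dist c y ≤ R := by
      rw [dist_comm]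
      exact mem_closedBall.mp hy
    rw [h2, hdnorm i] at h1
    push_cast
    linarith
end

section
/- Every compact set K in ℝ^n with diameter D(K) is contained in a closed ball of radius √(n/(2(n+1)))·D(K) (Jung's inequality). -/
open MeasureTheory Metric Set
open scoped ENNReal

section JungAux
open Metric Set Filter Finset
open scoped RealInnerProductSpace

lemma jung_finset {n : ℕ} (s : Finset (EuclideanSpace ℝ (Fin n))) (D : ℝ) (hD : 0 ≤ D)
    (hcard : s.card ≤ n + 1) (hdist : ∀ x ∈ s, ∀ y ∈ s, dist x y ≤ D) :
    ∃ c : EuclideanSpace ℝ (Fin n), ∀ x ∈ s,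
      dist c x ≤ Real.sqrt (n / (2 * (n + 1))) * D := by
  classical
  have hrhs : 0 ≤ Real.sqrt ((n : ℝ) / (2 * (n + 1))) * D :=
    mul_nonneg (Real.sqrt_nonneg _) hD
  rcases s.eq_empty_or_nonempty with rfl | hs
  · exact ⟨0, by simp⟩
  set f : EuclideanSpace ℝ (Fin n) → ℝ := fun c => s.sup' hs (fun x => dist c x) with hf
  have hf_le : ∀ c, ∀ x ∈ s, dist c x ≤ f c := fun c x hx => Finset.le_sup' _ hx
  have hf_lip : LipschitzWith 1 f := by
    apply LipschitzWith.of_dist_le_mul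
    intro a b
    rw [NNReal.coe_one, one_mul, Real.dist_eq, abs_sub_le_iff]
    constructor
    · rw [sub_le_iff_le_add]
      apply Finset.sup'_le
      intro x hx
      have h1 := dist_triangle a b x
      have h2 := hf_le b x hx
      linarith
    · rw [sub_le_iff_le_add]
      apply Finset.sup'_le
      intro x hx
      have h1 := dist_triangle b a x
      have h2 := hf_le a x hx
      have h3 : dist b a = dist a b := dist_comm b a
      linarith
  obtain ⟨x₀, hx₀⟩ := id hs
  have hcoer : Tendsto f (cocompact _) atTop := by
    apply tendsto_atTop_mono (fun c => hf_le c x₀ hx₀)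
    exact tendsto_dist_right_cocompact_atTop x₀
  obtain ⟨c₀, hc₀⟩ := hf_lip.continuous.exists_forall_le hcoer
  set r := f c₀ with hr_def
  have hr_le : ∀ x ∈ s, dist c₀ x ≤ r := hf_le c₀
  have hr0 : 0 ≤ r := le_trans dist_nonneg (hr_le x₀ hx₀)
  suffices hmain : r ≤ Real.sqrt (n / (2 * (n + 1))) * D by
    exact ⟨c₀, fun x hx => (hr_le x hx).trans hmain⟩
  rcases eq_or_lt_of_le hr0 with hrz | hrpos
  · rw [← hrz]; exact hrhs
  -- the set of farthest points
  set T := s.filter (fun x => dist c₀ x = r) with hT_def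
  have hT_ne : T.Nonempty := by
    obtain ⟨x, hxs, hxe⟩ := Finset.exists_mem_eq_sup' hs (fun x => dist c₀ x)
    exact ⟨x, Finset.mem_filter.2 ⟨hxs, hxe.symm⟩⟩
  have hT_dist : ∀ x ∈ T, dist c₀ x = r := fun x hx => (Finset.mem_filter.1 hx).2
  have hT_sub : ∀ x ∈ T, x ∈ s := fun x hx => (Finset.mem_filter.1 hx).1
  -- the center lies in the convex hull of the farthest points
  have hc₀CH : c₀ ∈ convexHull ℝ (T : Set (EuclideanSpace ℝ (Fin n))) := by
    by_contra hcon
    obtain ⟨g, u, hgu, hguc⟩ := geometric_hahn_banach_closed_point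
      (convex_convexHull ℝ _) (T.finite_toSet.isClosed_convexHull (𝕜 := ℝ)) hcon
    set v := (InnerProductSpace.toDual ℝ (EuclideanSpace ℝ (Fin n))).symm g with hv_def
    have hv : ∀ z, ⟪v, z⟫ = g z := fun z => InnerProductSpace.toDual_symm_apply
    have hvpos : ∀ x ∈ T, 0 < ⟪v, c₀ - x⟫ := by
      intro x hx
      have h1 : g x < u := hgu x (subset_convexHull ℝ _ (by exact_mod_cast hx))
      rw [inner_sub_right, hv, hv]
      linarith
    have hvne : v ≠ 0 := by
      obtain ⟨x, hx⟩ := hT_ne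
      intro h0
      have := hvpos x hx
      rw [h0, inner_zero_left] at this
      exact lt_irrefl _ this
    have hvnorm : (0:ℝ) < ‖v‖ := norm_pos_iff.2 hvne
    have hev : ∀ x ∈ s, ∀ᶠ t in nhdsWithin (0:ℝ) (Set.Ioi 0),
        dist (c₀ - t • v) x < r := by
      intro x hx
      by_cases hxT : x ∈ T
      · set p := ⟪v, c₀ - x⟫ with hp_def
        have hp : 0 < p := hvpos x hxT
        have hpos : (0:ℝ) < 2 * p / ‖v‖ ^ 2 := by positivity
        filter_upwards [Ioo_mem_nhdsGT_of_mem (Set.mem_Ico.2 ⟨le_refl (0:ℝ), hpos⟩)]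
          with t ht
        obtain ⟨ht0, ht1⟩ := ht
        have hsq : dist (c₀ - t • v) x ^ 2 < r ^ 2 := by
          have hrw : c₀ - t • v - x = (c₀ - x) - t • v := by abel
          rw [dist_eq_norm, hrw, norm_sub_sq_real, real_inner_smul_right, norm_smul]
          have hnorm : ‖c₀ - x‖ = r := by rw [← dist_eq_norm]; exact hT_dist x hxT
          have hip : ⟪c₀ - x, v⟫ = p := by rw [hp_def, real_inner_comm]
          rw [hnorm, hip, Real.norm_eq_abs, mul_pow, sq_abs]
          have hlt2 : t * ‖v‖ ^ 2 < 2 * p := (lt_div_iff₀ (by positivity)).1 ht1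
          nlinarith
        exact lt_of_pow_lt_pow_left₀ 2 hr0 hsq
      · have hlt : dist c₀ x < r := by
          refine lt_of_le_of_ne (hr_le x hx) ?_
          intro he
          exact hxT (Finset.mem_filter.2 ⟨hx, he⟩)
        have hpos : (0:ℝ) < (r - dist c₀ x) / ‖v‖ := by
          apply div_pos (by linarith) hvnorm
        filter_upwards [Ioo_mem_nhdsGT_of_mem (Set.mem_Ico.2 ⟨le_refl (0:ℝ), hpos⟩)]
          with t ht
        obtain ⟨ht0, ht1⟩ := ht
        calc dist (c₀ - t • v) x ≤ dist (c₀ - t • v) c₀ + dist c₀ x := dist_triangle _ _ _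
          _ = t * ‖v‖ + dist c₀ x := by
              rw [dist_eq_norm]
              simp [norm_smul, abs_of_pos ht0]
          _ < r := by
              have := (lt_div_iff₀ hvnorm).1 ht1
              linarith
    have hev' : ∀ᶠ t in nhdsWithin (0:ℝ) (Set.Ioi 0),
        ∀ x ∈ s, dist (c₀ - t • v) x < r := by
      rw [Finset.eventually_all]
      exact hev
    obtain ⟨t, ht⟩ := hev'.exists
    have : f (c₀ - t • v) < r := (Finset.sup'_lt_iff hs).2 (fun x hx => ht x hx)
    exact absurd (hc₀ (c₀ - t • v)) (not_le.2 this)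
  -- extract convex combination
  obtain ⟨w, hw0, hw1, hwc⟩ := Finset.mem_convexHull'.1 hc₀CH
  have hsum0 : ∑ x ∈ T, w x • (x - c₀) = (0 : EuclideanSpace ℝ (Fin n)) := by
    simp_rw [smul_sub]
    rw [Finset.sum_sub_distrib, hwc, ← Finset.sum_smul, hw1, one_smul, sub_self]
  have key : ∀ y ∈ T, ∑ x ∈ T, w x * ‖x - y‖ ^ 2 = 2 * r ^ 2 := by
    intro y hy
    have hny : ‖y - c₀‖ = r := by rw [norm_sub_rev, ← dist_eq_norm]; exact hT_dist y hy
    have hterm : ∀ x ∈ T, w x * ‖x - y‖ ^ 2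
        = w x * (2 * r ^ 2) - 2 * (w x * ⟪x - c₀, y - c₀⟫) := by
      intro x hx
      have hnx : ‖x - c₀‖ = r := by rw [norm_sub_rev, ← dist_eq_norm]; exact hT_dist x hx
      have hrw : x - y = (x - c₀) - (y - c₀) := by abel
      rw [hrw, norm_sub_sq_real, hnx, hny]
      ring
    rw [Finset.sum_congr rfl hterm, Finset.sum_sub_distrib, ← Finset.sum_mul, hw1, one_mul,
      ← Finset.mul_sum]
    have : ∑ x ∈ T, w x * ⟪x - c₀, y - c₀⟫ = ⟪∑ x ∈ T, w x • (x - c₀), y - c₀⟫ := by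
      rw [sum_inner]
      exact Finset.sum_congr rfl (fun x _ => (real_inner_smul_left _ _ _).symm)
    rw [this, hsum0, inner_zero_left]
    ring
  -- double sum estimate
  have hdouble : 2 * r ^ 2 = ∑ y ∈ T, ∑ x ∈ T, w y * (w x * ‖x - y‖ ^ 2) := by
    have : ∀ y ∈ T, ∑ x ∈ T, w y * (w x * ‖x - y‖ ^ 2) = w y * (2 * r ^ 2) := by
      intro y hy
      rw [← Finset.mul_sum, key y hy]
    rw [Finset.sum_congr rfl this, ← Finset.sum_mul, hw1, one_mul]
  have hbound : 2 * r ^ 2 ≤ D ^ 2 * (1 - ∑ y ∈ T, w y ^ 2) := by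
    have hterm : ∀ y ∈ T, ∀ x ∈ T, w y * (w x * ‖x - y‖ ^ 2)
        ≤ w y * w x * D ^ 2 - (if x = y then w y * w x * D ^ 2 else 0) := by
      intro y hy x hx
      by_cases hxy : x = y
      · subst hxy
        simp only [if_pos rfl, sub_self, sub_self]
        simp
      · rw [if_neg hxy, sub_zero]
        have h1 : ‖x - y‖ ≤ D := by
          rw [← dist_eq_norm]; exact hdist x (hT_sub x hx) y (hT_sub y hy)
        have h2 : ‖x - y‖ ^ 2 ≤ D ^ 2 := by nlinarith [norm_nonneg (x - y)]
        have := mul_nonneg (hw0 y hy) (hw0 x hx)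
        nlinarith
    calc 2 * r ^ 2 = ∑ y ∈ T, ∑ x ∈ T, w y * (w x * ‖x - y‖ ^ 2) := hdouble
      _ ≤ ∑ y ∈ T, ∑ x ∈ T, (w y * w x * D ^ 2 - (if x = y then w y * w x * D ^ 2 else 0)) := by
          apply Finset.sum_le_sum
          intro y hy
          exact Finset.sum_le_sum (hterm y hy)
      _ = D ^ 2 * (1 - ∑ y ∈ T, w y ^ 2) := by
          simp_rw [Finset.sum_sub_distrib]
          have h1 : ∀ y ∈ T, ∑ x ∈ T, w y * w x * D ^ 2 = w y * D ^ 2 := by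
            intro y hy
            have : ∀ x ∈ T, w y * w x * D ^ 2 = (w y * D ^ 2) * w x := fun x _ => by ring
            rw [Finset.sum_congr rfl this, ← Finset.mul_sum, hw1, mul_one]
          have h2 : ∀ y ∈ T, ∑ x ∈ T, (if x = y then w y * w x * D ^ 2 else 0)
              = w y ^ 2 * D ^ 2 := by
            intro y hy
            rw [Finset.sum_ite_eq' T y (fun x => w y * w x * D ^ 2), if_pos hy]
            ring
          rw [Finset.sum_congr rfl h1, Finset.sum_congr rfl h2, ← Finset.sum_mul, hw1,
            ← Finset.sum_mul]
          ring
  -- Cauchy–Schwarz on weights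
  have hCS : (1:ℝ) ≤ (T.card : ℝ) * ∑ y ∈ T, w y ^ 2 := by
    have := sq_sum_le_card_mul_sum_sq (s := T) (f := w)
    rw [hw1] at this
    simpa using this
  have hTcard : (T.card : ℝ) ≤ (n : ℝ) + 1 := by
    have h1 : T.card ≤ s.card := Finset.card_le_card (Finset.filter_subset _ _)
    have h2 : T.card ≤ n + 1 := h1.trans hcard
    exact_mod_cast h2
  have hwsq_nonneg : (0:ℝ) ≤ ∑ y ∈ T, w y ^ 2 := Finset.sum_nonneg (fun y _ => sq_nonneg _)
  have hCS' : (1:ℝ) ≤ ((n : ℝ) + 1) * ∑ y ∈ T, w y ^ 2 :=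
    hCS.trans (mul_le_mul_of_nonneg_right hTcard hwsq_nonneg)
  have hn1 : (0:ℝ) < (n : ℝ) + 1 := by positivity
  have hfinal : r ^ 2 ≤ (n : ℝ) / (2 * (n + 1)) * D ^ 2 := by
    have hw2 : (1:ℝ) / ((n:ℝ) + 1) ≤ ∑ y ∈ T, w y ^ 2 :=
      (div_le_iff₀ hn1).2 (by linarith [hCS'])
    have h3 : 2 * r ^ 2 ≤ D ^ 2 * (1 - 1 / ((n:ℝ) + 1)) := by
      nlinarith [sq_nonneg D]
    have e : (n:ℝ) / (2 * ((n:ℝ) + 1)) * D ^ 2 = D ^ 2 * (1 - 1 / ((n:ℝ) + 1)) / 2 := by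
      field_simp
      ring
    rw [e]
    linarith
  calc r = Real.sqrt (r ^ 2) := (Real.sqrt_sq hr0).symm
    _ ≤ Real.sqrt ((n : ℝ) / (2 * (n + 1)) * D ^ 2) := Real.sqrt_le_sqrt hfinal
    _ = Real.sqrt ((n : ℝ) / (2 * (n + 1))) * D := by
        rw [Real.sqrt_mul (by positivity), Real.sqrt_sq hD]

end JungAux

/-- Jung's inequality: every compact set in ℝⁿ is contained in a closed ball of radius
√(n/(2(n+1))) times its diameter. -/
theorem jung_inequality {n : ℕ} (K : Set (EuclideanSpace ℝ (Fin n))) (hK : IsCompact K) :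
    ∃ c : EuclideanSpace ℝ (Fin n),
      K ⊆ Metric.closedBall c (Real.sqrt (n / (2 * (n + 1))) * Metric.diam K) := by
  classical
  rcases K.eq_empty_or_nonempty with rfl | hKne
  · exact ⟨0, by simp⟩
  set D := Metric.diam K with hD_def
  have hD : 0 ≤ D := Metric.diam_nonneg
  set ρ := Real.sqrt ((n:ℝ) / (2 * (n + 1))) * D with hρ_def
  haveI : Nonempty K := hKne.to_subtype
  have h := Convex.helly_theorem_compact' (𝕜 := ℝ)
    (F := fun x : K => Metric.closedBall (x : EuclideanSpace ℝ (Fin n)) ρ)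
    (fun i => convex_closedBall _ _) (fun i => isCompact_closedBall _ _) ?_
  · obtain ⟨c, hc⟩ := h
    simp only [Set.mem_iInter] at hc
    refine ⟨c, fun x hx => ?_⟩
    have := hc ⟨x, hx⟩
    rw [Metric.mem_closedBall] at this ⊢
    rwa [dist_comm]
  · intro I hI
    rw [finrank_euclideanSpace_fin] at hI
    set s : Finset (EuclideanSpace ℝ (Fin n)) := I.image (fun x : K => (x : EuclideanSpace ℝ (Fin n))) with hs_def
    have hcard : s.card ≤ n + 1 := le_trans Finset.card_image_le hI
    have hmem : ∀ x ∈ s, x ∈ K := by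
      intro x hx
      obtain ⟨y, _, rfl⟩ := Finset.mem_image.1 hx
      exact y.2
    have hdist : ∀ x ∈ s, ∀ y ∈ s, dist x y ≤ D :=
      fun x hx y hy => Metric.dist_le_diam_of_mem hK.isBounded (hmem x hx) (hmem y hy)
    obtain ⟨c, hc⟩ := jung_finset s D hD hcard hdist
    refine ⟨c, ?_⟩
    simp only [Set.mem_iInter]
    intro i hi
    rw [Metric.mem_closedBall]
    exact hc i (Finset.mem_image_of_mem _ hi)
end

section
/- Let L ⊂ ℝ^n be a well-rounded full-rank lattice and A = {a₁,…,aₙ} a set of n linearly independent minimal vectors of L. Then the orthogonality defect of A satisfies δ(A) = ‖L‖ⁿ/|det(a₁,…,aₙ)| ≤ 2ⁿ/ωₙ, where ωₙ is the volume of the unit ball in ℝ^n. -/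
open MeasureTheory Metric Set
open scoped ENNReal

set_option maxHeartbeats 1000000 in
/-- For a well-rounded lattice, the orthogonality defect of a set of n linearly
independent minimal vectors is at most 2ⁿ/ωₙ. -/
theorem well_rounded_defect_bound {n : ℕ} (hn : 0 < n)
    (b : Module.Basis (Fin n) ℝ (EuclideanSpace ℝ (Fin n))) (lam : ℝ)
    (hlam : IsLeast {r : ℝ | ∃ x ∈ Submodule.span ℤ (Set.range ⇑b), x ≠ 0 ∧ ‖x‖ = r} lam)
    (a : Fin n → EuclideanSpace ℝ (Fin n)) (ha : LinearIndependent ℝ a)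
    (haL : ∀ i, a i ∈ Submodule.span ℤ (Set.range ⇑b)) (hnorm : ∀ i, ‖a i‖ = lam) :
    lam ^ n / |detv a| ≤ 2 ^ n
      / (volume (Metric.ball (0 : EuclideanSpace ℝ (Fin n)) 1)).toReal := by
  classical
  have hnz : Nonempty (Fin n) := ⟨⟨0, hn⟩⟩
  -- lam > 0
  obtain ⟨x₀, hx₀L, hx₀ne, hx₀norm⟩ := hlam.1
  have hlam_pos : 0 < lam := hx₀norm ▸ norm_pos_iff.mpr hx₀ne
  set ω : ℝ≥0∞ := volume (Metric.ball (0 : EuclideanSpace ℝ (Fin n)) 1) with hω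
  have hω_pos : 0 < ω := measure_ball_pos volume 0 one_pos
  have hω_fin : ω ≠ ⊤ := measure_ball_lt_top.ne
  set F := ZSpan.fundamentalDomain b with hF
  have hfin : Module.finrank ℝ (EuclideanSpace ℝ (Fin n)) = n := finrank_euclideanSpace_fin
  haveI : Countable (Submodule.span ℤ (Set.range ⇑b)).toAddSubgroup :=
    inferInstanceAs (Countable (Submodule.span ℤ (Set.range ⇑b)))
  -- Minkowski
  have hmink : ENNReal.ofReal (lam ^ n) * ω ≤ volume F * 2 ^ n := by
    by_contra hcon
    push_neg at hcon
    have hball : volume (Metric.ball (0 : EuclideanSpace ℝ (Fin n)) lam)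
        = ENNReal.ofReal (lam ^ n) * ω := by
      rw [Measure.addHaar_ball volume 0 hlam_pos.le, hfin]
    obtain ⟨y, hyne, hymem⟩ := exists_ne_zero_mem_lattice_of_measure_mul_two_pow_lt_measure
      (μ := volume) (ZSpan.isAddFundamentalDomain' b volume)
      (fun z hz => by simpa using hz) (convex_ball 0 lam) (by rw [hball, hfin]; exact hcon)
    have hy' : lam ≤ ‖(y : EuclideanSpace ℝ (Fin n))‖ := by
      refine hlam.2 ⟨(y : EuclideanSpace ℝ (Fin n)), y.2, ?_, rfl⟩
      exact fun h => hyne (Subtype.ext h)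
    rw [mem_ball_zero_iff] at hymem
    linarith
  -- the basis formed by a
  have hcard : Fintype.card (Fin n) = Module.finrank ℝ (EuclideanSpace ℝ (Fin n)) := by
    simp [hfin]
  set ba := basisOfLinearIndependentOfCardEqFinrank ha hcard with hba
  have hba_coe : ⇑ba = a := coe_basisOfLinearIndependentOfCardEqFinrank ha hcard
  set b₀ := (EuclideanSpace.basisFun (Fin n) ℝ).toBasis with hb₀
  have hFb₀ : volume (ZSpan.fundamentalDomain b₀) = 1 := by
    rw [measure_congr (ZSpan.fundamentalDomain_ae_parallelepiped b₀ volume)]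
    exact (EuclideanSpace.basisFun (Fin n) ℝ).volume_parallelepiped
  -- volume of fundamental domain of a
  have hFa : volume (ZSpan.fundamentalDomain ba) = ENNReal.ofReal |detv a| := by
    rw [ZSpan.measure_fundamentalDomain ba volume b₀, hFb₀, mul_one]
    congr 2
    rw [Module.Basis.det_apply, detv]
    congr 1
    ext i j
    simp [Module.Basis.toMatrix_apply, hb₀, EuclideanSpace.basisFun_repr, hba_coe]
  -- |b.det a| ≥ 1
  have hdet_int : ∃ M : Matrix (Fin n) (Fin n) ℤ, (b.toMatrix ⇑ba) = fun i j => (M i j : ℝ) := by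
    have : ∀ i j, ∃ m : ℤ, (m : ℝ) = b.repr (a j) i := by
      intro i j
      exact (b.mem_span_iff_repr_mem ℤ (a j)).mp (haL j) i
    choose M hM using fun j i => this i j
    exact ⟨fun i j => M j i, by ext i j; rw [Module.Basis.toMatrix_apply, hba_coe, hM]⟩
  have hFb_le : volume F ≤ volume (ZSpan.fundamentalDomain ba) := by
    rw [ZSpan.measure_fundamentalDomain ba volume b]
    obtain ⟨M, hM⟩ := hdet_int
    have hdet : b.det ⇑ba = ((M.det : ℤ) : ℝ) := by
      rw [Module.Basis.det_apply, show (b.toMatrix ⇑ba) = M.map (Int.cast) from by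
        ext i j; simp [hM, Matrix.map_apply]]
      exact (RingHom.map_det (Int.castRingHom ℝ) M).symm
    rw [hdet]
    have hMdet_ne : M.det ≠ 0 := by
      intro h
      have := (b.isUnit_det ba).ne_zero
      rw [hdet, h] at this
      simp at this
    have h1 : (1 : ℝ≥0∞) ≤ ENNReal.ofReal |((M.det : ℤ) : ℝ)| := by
      rw [← Int.cast_abs]
      have : (1 : ℝ) ≤ ((|M.det| : ℤ) : ℝ) := by
        exact_mod_cast Int.one_le_abs hMdet_ne
      rw [← ENNReal.ofReal_one]
      exact ENNReal.ofReal_le_ofReal this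
    calc volume F = 1 * volume F := (one_mul _).symm
      _ ≤ ENNReal.ofReal |((M.det : ℤ) : ℝ)| * volume F :=
          mul_le_mul_left h1 _
  have hdetv_ne : detv a ≠ 0 := by
    intro h
    have := ZSpan.measure_fundamentalDomain_ne_zero ba (μ := volume)
    rw [hFa, h] at this
    simp at this
  have habs_pos : 0 < |detv a| := abs_pos.mpr hdetv_ne
  have hmain : ENNReal.ofReal (lam ^ n) * ω ≤ ENNReal.ofReal |detv a| * 2 ^ n := by
    calc ENNReal.ofReal (lam ^ n) * ω ≤ volume F * 2 ^ n := hmink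
      _ ≤ ENNReal.ofReal |detv a| * 2 ^ n := by
          rw [← hFa]; exact mul_le_mul_left hFb_le _
  have hreal : lam ^ n * ω.toReal ≤ |detv a| * 2 ^ n := by
    have h1 := ENNReal.toReal_mono (ENNReal.mul_ne_top ENNReal.ofReal_ne_top (by simp)) hmain
    rwa [ENNReal.toReal_mul, ENNReal.toReal_mul, ENNReal.toReal_ofReal (by positivity),
      ENNReal.toReal_ofReal (abs_nonneg _), ENNReal.toReal_pow, ENNReal.toReal_ofNat] at h1
  rw [div_le_div_iff₀ habs_pos (ENNReal.toReal_pos hω_pos.ne' hω_fin)]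
  linarith
end
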